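/- arXiv:2104.07883 — 2 statements merged into one kernel-verified Lean document; each statement's English description precedes it below -/
import Mathlib

section
/- Consider a simplified general KCM on L = {1,…,|L|} with range R, sub-volumes L₁ = {1,…,ℓ} and L₂ = {ℓ−Δ+1,…,|L|} with Δ ∈ [0,ℓ], and the middle block M = {ℓ−⌊Δ/2⌋−R,…,ℓ−⌊Δ/2⌋+R} ⊆ L₁∩L₂. Let η ∈ S_L with {η}_L = L. Let θ ∈ S_L satisfy θ_{L∖L₁} = η_{L∖L₁} and θ_{L₁} in the same irreducible component as η_{L₁} for the KCM on volume L₁ with boundary condition η_{L∖L₁}, and suppose there exists a block B = {x−R,…,x+R} ⊆ L₁∩L₂ with x+R < min M such that every site of B ∩ {θ}_{L₁}^{θ_{L∖L₁}} is infected in θ. Let θ′ ∈ S_L satisfy θ′_{L∖L₂} = θ_{L∖L₂} and θ′_{L₂} in the same irreducible component as θ_{L₂} for the KCM on volume L₂ with boundary condition θ_{L∖L₂}, and suppose there exists a block B′ = {x′−R,…,x′+R} ⊆ L₁∩L₂ with x′−R > max M such that every site of B′ ∩ {θ′}_{L₂}^{θ′_{L∖L₂}} is infected in θ′. Then |M ∩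 {θ′}_{L₁}^{θ′_{L∖L₁}}| ≥ min( |M ∩ {η}_{L₁}^{η_{L∖L₁}}| + 1, 2R+1 ). -/
open scoped Classical

namespace KCM

/-- A full configuration assigns a state to every site of `ℤ`.  The boundary
condition is the restriction of a configuration outside the volume. -/
abbrev Config (S : ℤ → Type) : Type := ∀ x : ℤ, S x

variable {S : ℤ → Type}

/-- The constraint at site `x` is satisfied in configuration `η`: some update
rule of `x` has all its sites infected. -/
def Constraint (I : ∀ x : ℤ, Set (S x)) (U : ℤ → Finset (Finset ℤ)) (x : ℤ)
    (η : Config S) : Prop :=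
  ∃ u ∈ U x, ∀ y ∈ u, η y ∈ I y

/-- A legal transition of the KCM on volume `L`: the two configurations agree
off a single site `x ∈ L` whose constraint is satisfied. -/
def Step (I : ∀ x : ℤ, Set (S x)) (U : ℤ → Finset (Finset ℤ)) (L : Finset ℤ)
    (η η' : Config S) : Prop :=
  ∃ x ∈ L, Constraint I U x η ∧ ∀ y : ℤ, y ≠ x → η' y = η y

/-- `η` and `η'` belong to the same irreducible component of the KCM on volume
`L` (connected component of the transition graph on configurations). -/
def Reach (I : ∀ x : ℤ, Set (S x)) (U : ℤ → Finset (Finset ℤ)) (L : Finset ℤ)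
    (η η' : Config S) : Prop :=
  Relation.ReflTransGen (fun ζ ζ' => Step I U L ζ ζ' ∨ Step I U L ζ' ζ) η η'

/-- The closure `{η}_L^ω`: the set of sites of `L` whose state can eventually
be updated starting from `η`. -/
def closure (I : ∀ x : ℤ, Set (S x)) (U : ℤ → Finset (Finset ℤ)) (L : Finset ℤ)
    (η : Config S) : Set ℤ :=
  {x | x ∈ L ∧ ∃ η', Reach I U L η η' ∧ Constraint I U x η'}

/-- Replace the states of `η` inside `Λ` by `ξ`. -/
def glue (Λ : Finset ℤ) (η : Config S) (ξ : ∀ x : {y : ℤ // y ∈ Λ}, S x.1) :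
    Config S :=
  fun x => if h : x ∈ Λ then ξ ⟨x, h⟩ else η x

variable [∀ x, Fintype (S x)]

/-- Expectation of `f` when the states of `η` inside `Λ` are resampled from the
product of the measures `π x`, `x ∈ Λ`, conditioned on the event `P`. -/
noncomputable def expOn (π : ∀ x : ℤ, S x → ℝ) (Λ : Finset ℤ)
    (P : Config S → Prop) (η : Config S) (f : Config S → ℝ) : ℝ :=
  (∑ ξ : ∀ x : {y : ℤ // y ∈ Λ}, S x.1,
      if P (glue Λ η ξ) then (∏ x : {y : ℤ // y ∈ Λ}, π x.1 (ξ x)) * f (glue Λ η ξ) else 0) /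
  (∑ ξ : ∀ x : {y : ℤ // y ∈ Λ}, S x.1,
      if P (glue Λ η ξ) then (∏ x : {y : ℤ // y ∈ Λ}, π x.1 (ξ x)) else 0)

/-- Variance of `f` when the states of `η` inside `Λ` are resampled from the
product of the measures `π x`, `x ∈ Λ`, conditioned on the event `P`. -/
noncomputable def varOn (π : ∀ x : ℤ, S x → ℝ) (Λ : Finset ℤ)
    (P : Config S → Prop) (η : Config S) (f : Config S → ℝ) : ℝ :=
  expOn π Λ P η (fun ζ => (f ζ - expOn π Λ P η f) ^ 2)


section Aux

variable {S : ℤ → Type}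

/-- The monotone bootstrap closure of the infected sites of `η`, with additions
allowed inside the volume `Λ`. -/
inductive Boot (I : ∀ x : ℤ, Set (S x)) (U : ℤ → Finset (Finset ℤ)) (Λ : Finset ℤ)
    (η : Config S) : ℤ → Prop
  | base (y : ℤ) (h : η y ∈ I y) : Boot I U Λ η y
  | step (y : ℤ) (hy : y ∈ Λ) (u : Finset ℤ) (hu : u ∈ U y)
      (h : ∀ z ∈ u, Boot I U Λ η z) : Boot I U Λ η y

theorem reach_symm {I : ∀ x : ℤ, Set (S x)} {U : ℤ → Finset (Finset ℤ)} {Λ : Finset ℤ}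
    {η η' : Config S} (h : Reach I U Λ η η') : Reach I U Λ η' η :=
  Relation.ReflTransGen.mono (fun _ _ hs => Or.symm hs) _ _ (Relation.ReflTransGen.swap η' η h)

theorem reach_mono {I : ∀ x : ℤ, Set (S x)} {U : ℤ → Finset (Finset ℤ)} {Λ Λ' : Finset ℤ}
    (hΛ : Λ ⊆ Λ') {η η' : Config S} (h : Reach I U Λ η η') : Reach I U Λ' η η' := by
  refine Relation.ReflTransGen.mono ?_ _ _ h
  rintro a b (⟨w, hw, hc, hag⟩ | ⟨w, hw, hc, hag⟩)
  · exact Or.inl ⟨w, hΛ hw, hc, hag⟩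
  · exact Or.inr ⟨w, hΛ hw, hc, hag⟩

theorem closure_reach {I : ∀ x : ℤ, Set (S x)} {U : ℤ → Finset (Finset ℤ)} {Λ : Finset ℤ}
    {η η' : Config S} (h : Reach I U Λ η η') : closure I U Λ η = closure I U Λ η' := by
  ext z
  constructor
  · rintro ⟨hz, ζ, hre, hc⟩
    exact ⟨hz, ζ, (reach_symm h).trans hre, hc⟩
  · rintro ⟨hz, ζ, hre, hc⟩
    exact ⟨hz, ζ, h.trans hre, hc⟩

theorem frozen {I : ∀ x : ℤ, Set (S x)} {U : ℤ → Finset (Finset ℤ)} {Λ : Finset ℤ}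
    {η η' : Config S} (h : Reach I U Λ η η') {y : ℤ} (hy : y ∉ closure I U Λ η) :
    η' y = η y := by
  induction h with
  | refl => rfl
  | tail hab hbc ih =>
    rename_i b c
    rcases hbc with ⟨w, hw, hc, hag⟩ | ⟨w, hw, hc, hag⟩
    · by_cases hyw : y = w
      · subst hyw
        exact absurd ⟨hw, b, hab, hc⟩ hy
      · exact (hag y hyw).trans ih
    · by_cases hyw : y = w
      · subst hyw
        exact absurd ⟨hw, c, hab.tail (Or.inr ⟨y, hw, hc, hag⟩), hc⟩ hy
      · exact ((hag y hyw).symm).trans ih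

theorem infected_boot {n : ℤ} {I : ∀ x : ℤ, Set (S x)} {U : ℤ → Finset (Finset ℤ)}
    {Λ : Finset ℤ} (hΛ : Λ ⊆ Finset.Icc 1 n)
    (hUx : ∀ x ∈ Finset.Icc (1 : ℤ) n, ∀ u ∈ U x, x ∉ u)
    {η η' : Config S} (h : Reach I U Λ η η') :
    ∀ y : ℤ, η' y ∈ I y → Boot I U Λ η y := by
  induction h with
  | refl => exact fun y hy => Boot.base y hy
  | tail hab hbc ih =>
    rename_i b c
    intro y hy
    rcases hbc with ⟨w, hw, ⟨u, hu, hinf⟩, hag⟩ | ⟨w, hw, ⟨u, hu, hinf⟩, hag⟩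
    · by_cases hyw : y = w
      · subst hyw
        exact Boot.step y hw u hu (fun z hz => ih z (hinf z hz))
      · exact ih y (by rw [← hag y hyw]; exact hy)
    · by_cases hyw : y = w
      · subst hyw
        refine Boot.step y hw u hu (fun z hz => ih z ?_)
        have hzw : z ≠ y := fun hzw => hUx y (hΛ hw) u hu (hzw ▸ hz)
        rw [hag z hzw]
        exact hinf z hz
      · exact ih y (by rw [hag y hyw]; exact hy)

/-- Finite-stage version of the bootstrap closure. -/
def bootN (I : ∀ x : ℤ, Set (S x)) (U : ℤ → Finset (Finset ℤ)) (Λ : Finset ℤ)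
    (η : Config S) : ℕ → ℤ → Prop
  | 0, y => η y ∈ I y
  | (k+1), y => bootN I U Λ η k y ∨ (y ∈ Λ ∧ ∃ u ∈ U y, ∀ z ∈ u, bootN I U Λ η k z)

theorem bootN_mono {I : ∀ x : ℤ, Set (S x)} {U : ℤ → Finset (Finset ℤ)} {Λ : Finset ℤ}
    {η : Config S} {j k : ℕ} (hjk : j ≤ k) {y : ℤ}
    (h : bootN I U Λ η j y) : bootN I U Λ η k y := by
  induction hjk with
  | refl => exact h
  | step _ ih => exact Or.inl ih

theorem boot_exists_bootN {I : ∀ x : ℤ, Set (S x)} {U : ℤ → Finset (Finset ℤ)}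
    {Λ : Finset ℤ} {η : Config S} {y : ℤ}
    (h : Boot I U Λ η y) : ∃ k, bootN I U Λ η k y := by
  induction h with
  | base y hy => exact ⟨0, hy⟩
  | step y hy u hu h ih =>
    have hex : ∃ k, ∀ z ∈ u, bootN I U Λ η k z := by
      choose f hf using fun z : {z // z ∈ u} => ih z.1 z.2
      refine ⟨u.attach.sup f, fun z hz => ?_⟩
      exact bootN_mono (Finset.le_sup (Finset.mem_attach u ⟨z, hz⟩)) (hf ⟨z, hz⟩)
    obtain ⟨k, hk⟩ := hex
    exact ⟨k + 1, Or.inr ⟨hy, u, hu, hk⟩⟩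

theorem realize {I : ∀ x : ℤ, Set (S x)} {U : ℤ → Finset (Finset ℤ)} {Λ : Finset ℤ}
    {η : Config S} (hI : ∀ y : ℤ, ∃ s, s ∈ I y) :
    ∀ k : ℕ, ∃ η', Reach I U Λ η η' ∧ ∀ y : ℤ, bootN I U Λ η k y → η' y ∈ I y := by
  intro k
  induction k with
  | zero => exact ⟨η, Relation.ReflTransGen.refl, fun y hy => hy⟩
  | succ k ih =>
    obtain ⟨η₁, hre₁, h₁⟩ := ih
    have key : ∀ w : Finset ℤ, (∀ a ∈ w, a ∈ Λ ∧ bootN I U Λ η (k+1) a) →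
        ∃ η₂, Reach I U Λ η₁ η₂ ∧ (∀ y, bootN I U Λ η k y → η₂ y ∈ I y) ∧
          (∀ a ∈ w, η₂ a ∈ I a) := by
      intro w
      induction w using Finset.induction_on with
      | empty =>
        exact fun _ => ⟨η₁, Relation.ReflTransGen.refl, h₁,
          fun a ha => absurd ha (Finset.notMem_empty a)⟩
      | insert _ _ ha ih₂ =>
        rename_i a w
        intro hw
        obtain ⟨η₂, hre₂, h2, h3⟩ := ih₂ (fun b hb => hw b (Finset.mem_insert_of_mem hb))
        obtain ⟨haΛ, hab⟩ := hw a (Finset.mem_insert_self a w)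
        have hab' : bootN I U Λ η k a ∨ (a ∈ Λ ∧ ∃ u ∈ U a, ∀ z ∈ u, bootN I U Λ η k z) := hab
        rcases hab' with hk | ⟨_, u, hu, hsmall⟩
        · refine ⟨η₂, hre₂, h2, fun b hb => ?_⟩
          rcases Finset.mem_insert.mp hb with rfl | hb
          · exact h2 b hk
          · exact h3 b hb
        · obtain ⟨s₀, hs₀⟩ := hI a
          refine ⟨Function.update η₂ a s₀,
            hre₂.tail (Or.inl ⟨a, haΛ, ⟨u, hu, fun z hz => h2 z (hsmall z hz)⟩,
              fun y hy => Function.update_of_ne hy s₀ η₂⟩), ?_, ?_⟩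
          · intro y hy
            by_cases hya : y = a
            · subst hya; rw [Function.update_self]; exact hs₀
            · rw [Function.update_of_ne hya]; exact h2 y hy
          · intro b hb
            by_cases hba : b = a
            · subst hba; rw [Function.update_self]; exact hs₀
            · rcases Finset.mem_insert.mp hb with h | h
              · exact absurd h hba
              · rw [Function.update_of_ne hba]; exact h3 b h
    obtain ⟨η₂, hre₂, h2, h3⟩ := key (Λ.filter (fun y => bootN I U Λ η (k+1) y))
      (fun a ha => ⟨(Finset.mem_filter.mp ha).1, (Finset.mem_filter.mp ha).2⟩)
    refine ⟨η₂, hre₁.trans hre₂, fun y hy => ?_⟩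
    have hy' : bootN I U Λ η k y ∨ (y ∈ Λ ∧ ∃ u ∈ U y, ∀ z ∈ u, bootN I U Λ η k z) := hy
    rcases hy' with hy1 | hy2
    · exact h2 y hy1
    · exact h3 y (Finset.mem_filter.mpr ⟨hy2.1, Or.inr hy2⟩)

theorem closure_mem_boot {n : ℤ} {I : ∀ x : ℤ, Set (S x)} {U : ℤ → Finset (Finset ℤ)}
    {Λ : Finset ℤ} (hΛ : Λ ⊆ Finset.Icc 1 n)
    (hUx : ∀ x ∈ Finset.Icc (1 : ℤ) n, ∀ u ∈ U x, x ∉ u)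
    {η : Config S} {z : ℤ} (hz : z ∈ closure I U Λ η) :
    z ∈ Λ ∧ ∃ u ∈ U z, ∀ y ∈ u, Boot I U Λ η y := by
  obtain ⟨hzΛ, η', hre, u, hu, hc⟩ := hz
  exact ⟨hzΛ, u, hu, fun y hy => infected_boot hΛ hUx hre y (hc y hy)⟩

theorem boot_mem_closure {I : ∀ x : ℤ, Set (S x)} {U : ℤ → Finset (Finset ℤ)}
    {Λ : Finset ℤ} (hI : ∀ y : ℤ, ∃ s, s ∈ I y)
    {η : Config S} {z : ℤ} (hzΛ : z ∈ Λ) {u : Finset ℤ} (hu : u ∈ U z)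
    (hb : ∀ y ∈ u, Boot I U Λ η y) : z ∈ closure I U Λ η := by
  have hex : ∃ k, ∀ y ∈ u, bootN I U Λ η k y := by
    choose f hf using fun y : {y // y ∈ u} => boot_exists_bootN (hb y.1 y.2)
    exact ⟨u.attach.sup f, fun y hy =>
      bootN_mono (Finset.le_sup (Finset.mem_attach u ⟨y, hy⟩)) (hf ⟨y, hy⟩)⟩
  obtain ⟨k, hk⟩ := hex
  obtain ⟨η', hre, hinf⟩ := realize hI k
  exact ⟨hzΛ, η', hre, u, hu, fun y hy => hinf y (hk y hy)⟩

theorem boot_of_mem_closure {n : ℤ} {I : ∀ x : ℤ, Set (S x)} {U : ℤ → Finset (Finset ℤ)}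
    {Λ : Finset ℤ} (hΛ : Λ ⊆ Finset.Icc 1 n)
    (hUx : ∀ x ∈ Finset.Icc (1 : ℤ) n, ∀ u ∈ U x, x ∉ u)
    {η : Config S} {z : ℤ} (hz : z ∈ closure I U Λ η) : Boot I U Λ η z := by
  obtain ⟨hzΛ, u, hu, hb⟩ := closure_mem_boot hΛ hUx hz
  exact Boot.step z hzΛ u hu hb

end Aux

/-- Two-step increase of the closure restricted to the middle
block `M = {ℓ-⌊Δ/2⌋-R,…,ℓ-⌊Δ/2⌋+R}` after an update in `L₁` leaving an
infected block left of `M` and an update in `L₂` leaving an infected block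
right of `M`. -/
theorem statement10 (S : ℤ → Type) [∀ x, Fintype (S x)] (n ℓ Δ : ℤ)
    (q : ℝ) (R : ℕ)
    (hq0 : 0 < q) (hq1 : q ≤ 1) (hR : 1 ≤ R)
    (π : ∀ x : ℤ, S x → ℝ) (I : ∀ x : ℤ, Set (S x)) (U : ℤ → Finset (Finset ℤ))
    (hπpos : ∀ (x : ℤ) (s : S x), 0 < π x s)
    (hπsum : ∀ x : ℤ, ∑ s : S x, π x s = 1)
    (hπI : ∀ x : ℤ, q ≤ ∑ s : S x, if s ∈ I x then π x s else 0)
    (hUx : ∀ x ∈ Finset.Icc (1 : ℤ) n, ∀ u ∈ U x, x ∉ u)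
    (hUR : ∀ x ∈ Finset.Icc (1 : ℤ) n, ∀ u ∈ U x, ∀ y ∈ u, |y - x| ≤ (R : ℤ))
    (hUL : ∀ x ∈ Finset.Icc (1 : ℤ) n, ∀ u ∈ U x, u ⊆ Finset.Icc (1 : ℤ) n)
    (hℓ1 : 1 ≤ ℓ) (hℓn : ℓ ≤ n) (hΔ0 : 0 ≤ Δ) (hΔℓ : Δ ≤ ℓ)
    (hM : Finset.Icc (ℓ - Δ / 2 - (R : ℤ)) (ℓ - Δ / 2 + (R : ℤ)) ⊆
      Finset.Icc (1 : ℤ) ℓ ∩ Finset.Icc (ℓ - Δ + 1) n)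
    (η : Config S) (hη : closure I U (Finset.Icc (1 : ℤ) n) η = ↑(Finset.Icc (1 : ℤ) n))
    (θ : Config S) (hθ : Reach I U (Finset.Icc (1 : ℤ) ℓ) η θ)
    (x : ℤ)
    (hB : Finset.Icc (x - (R : ℤ)) (x + (R : ℤ)) ⊆
      Finset.Icc (1 : ℤ) ℓ ∩ Finset.Icc (ℓ - Δ + 1) n)
    (hxM : x + (R : ℤ) < ℓ - Δ / 2 - (R : ℤ))
    (hBinf : ∀ y ∈ Finset.Icc (x - (R : ℤ)) (x + (R : ℤ)),
      y ∈ closure I U (Finset.Icc (1 : ℤ) ℓ) θ → θ y ∈ I y)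
    (θ' : Config S) (hθ' : Reach I U (Finset.Icc (ℓ - Δ + 1) n) θ θ')
    (x' : ℤ)
    (hB' : Finset.Icc (x' - (R : ℤ)) (x' + (R : ℤ)) ⊆
      Finset.Icc (1 : ℤ) ℓ ∩ Finset.Icc (ℓ - Δ + 1) n)
    (hx'M : ℓ - Δ / 2 + (R : ℤ) < x' - (R : ℤ))
    (hB'inf : ∀ y ∈ Finset.Icc (x' - (R : ℤ)) (x' + (R : ℤ)),
      y ∈ closure I U (Finset.Icc (ℓ - Δ + 1) n) θ' → θ' y ∈ I y) :
    min (((Finset.Icc (ℓ - Δ / 2 - (R : ℤ)) (ℓ - Δ / 2 + (R : ℤ))).filter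
          (fun y => y ∈ closure I U (Finset.Icc (1 : ℤ) ℓ) η)).card + 1) (2 * R + 1) ≤
      ((Finset.Icc (ℓ - Δ / 2 - (R : ℤ)) (ℓ - Δ / 2 + (R : ℤ))).filter
          (fun y => y ∈ closure I U (Finset.Icc (1 : ℤ) ℓ) θ')).card := by
  classical
  have hR0 : (0:ℤ) ≤ R := Int.ofNat_nonneg R
  set m₀ : ℤ := ℓ - Δ / 2 with hm₀
  -- unpack the geometric hypotheses
  have hMne : m₀ - R ≤ m₀ + R := by linarith
  have hMa := hM (Finset.mem_Icc.mpr ⟨le_refl _, hMne⟩)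
  have hMb := hM (Finset.mem_Icc.mpr ⟨hMne, le_refl _⟩)
  have hBa := hB (Finset.mem_Icc.mpr ⟨le_refl _, by linarith⟩)
  have hBb := hB (Finset.mem_Icc.mpr ⟨by linarith, le_refl _⟩)
  have hB'a := hB' (Finset.mem_Icc.mpr ⟨le_refl _, by linarith⟩)
  have hB'b := hB' (Finset.mem_Icc.mpr ⟨by linarith, le_refl _⟩)
  rw [Finset.mem_inter, Finset.mem_Icc, Finset.mem_Icc] at hMa hMb hBa hBb hB'a hB'b
  have hn1 : (1:ℤ) ≤ m₀ - R := hMa.1.1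
  have hn2 : m₀ - R ≤ ℓ := hMa.1.2
  have hn4 : m₀ + R ≤ ℓ := hMb.1.2
  have hn5 : m₀ + R ≤ n := hMb.2.2
  have hb1 : (1:ℤ) ≤ x - R := hBa.1.1
  have hb3 : ℓ - Δ + 1 ≤ x - R := hBa.2.1
  have hb4 : x + R ≤ ℓ := hBb.1.2
  have hc3 : ℓ - Δ + 1 ≤ x' - R := hB'a.2.1
  have hc4 : x' + R ≤ ℓ := hB'b.1.2
  -- infected states exist
  have hIne : ∀ y : ℤ, ∃ s, s ∈ I y := by
    intro y
    by_contra hne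
    push_neg at hne
    have h0 : (∑ s : S y, if s ∈ I y then π y s else 0) = 0 :=
      Finset.sum_eq_zero (fun s _ => if_neg (hne s))
    have := hπI y
    rw [h0] at this
    linarith
  -- volume inclusions
  have hL1sub : Finset.Icc (1:ℤ) ℓ ⊆ Finset.Icc (1:ℤ) n := Finset.Icc_subset_Icc le_rfl hℓn
  have hL2sub : Finset.Icc (ℓ - Δ + 1) n ⊆ Finset.Icc (1:ℤ) n :=
    Finset.Icc_subset_Icc (by linarith) le_rfl
  -- closure invariance along the given reaches
  have hCθ : closure I U (Finset.Icc 1 ℓ) η = closure I U (Finset.Icc 1 ℓ) θ :=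
    closure_reach hθ
  have hDθ : closure I U (Finset.Icc (ℓ - Δ + 1) n) θ
      = closure I U (Finset.Icc (ℓ - Δ + 1) n) θ' := closure_reach hθ'
  have hReachθ' : Reach I U (Finset.Icc (1:ℤ) n) η θ' :=
    (reach_mono hL1sub hθ).trans (reach_mono hL2sub hθ')
  have hclθ' : closure I U (Finset.Icc (1:ℤ) n) θ' = ↑(Finset.Icc (1:ℤ) n) :=
    (closure_reach hReachθ').symm.trans hη
  -- the blocks convert bootstrap membership into infection
  have hBconv : ∀ y : ℤ, x - R ≤ y → y ≤ x + R →
      Boot I U (Finset.Icc 1 ℓ) θ y → θ y ∈ I y := by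
    intro y h1 h2 hb
    cases hb with
    | base _ h => exact h
    | step _ hyΛ u hu h =>
      exact hBinf y (Finset.mem_Icc.mpr ⟨h1, h2⟩) (boot_mem_closure hIne hyΛ hu h)
  have hB'conv : ∀ y : ℤ, x' - R ≤ y → y ≤ x' + R →
      Boot I U (Finset.Icc (ℓ - Δ + 1) n) θ' y → θ' y ∈ I y := by
    intro y h1 h2 hb
    cases hb with
    | base _ h => exact h
    | step _ hyΛ u hu h =>
      exact hB'inf y (Finset.mem_Icc.mpr ⟨h1, h2⟩) (boot_mem_closure hIne hyΛ hu h)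
  -- screening at B : the L₁-bootstrap right of B is contained in the L₂-bootstrap
  have bootA : ∀ z : ℤ, Boot I U (Finset.Icc 1 ℓ) θ z → x < z →
      Boot I U (Finset.Icc (ℓ - Δ + 1) n) θ z := by
    intro z hz
    induction hz with
    | base y h => exact fun _ => Boot.base y h
    | step y hyΛ u hu h ih =>
      intro hxy
      have hyn : y ∈ Finset.Icc (1:ℤ) n := hL1sub hyΛ
      rw [Finset.mem_Icc] at hyΛ
      refine Boot.step y (Finset.mem_Icc.mpr ⟨by linarith, by linarith⟩) u hu ?_
      intro w hw
      have hrange := hUR y hyn u hu w hw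
      rw [abs_le] at hrange
      by_cases hwx : x < w
      · exact ih w hw hwx
      · push_neg at hwx
        exact Boot.base w (hBconv w (by linarith) (by linarith) (h w hw))
  have stepA : ∀ m : ℤ, m₀ - R ≤ m → m ≤ m₀ + R →
      m ∈ closure I U (Finset.Icc 1 ℓ) θ →
      m ∈ closure I U (Finset.Icc (ℓ - Δ + 1) n) θ := by
    intro m h1 h2 hm
    obtain ⟨hmΛ, u, hu, hb⟩ := closure_mem_boot hL1sub hUx hm
    have hmn : m ∈ Finset.Icc (1:ℤ) n := hL1sub hmΛ
    refine boot_mem_closure hIne (Finset.mem_Icc.mpr ⟨by linarith [hMa.2.1], by linarith⟩) hu ?_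
    intro w hw
    have hrange := hUR m hmn u hu w hw
    rw [abs_le] at hrange
    exact bootA w (hb w hw) (by linarith)
  -- screening at B' : the L₂-bootstrap left of B' is contained in the L₁-bootstrap
  have bootB : ∀ z : ℤ, Boot I U (Finset.Icc (ℓ - Δ + 1) n) θ' z → z < x' →
      Boot I U (Finset.Icc 1 ℓ) θ' z := by
    intro z hz
    induction hz with
    | base y h => exact fun _ => Boot.base y h
    | step y hyΛ u hu h ih =>
      intro hyx'
      have hyn : y ∈ Finset.Icc (1:ℤ) n := hL2sub hyΛ
      rw [Finset.mem_Icc] at hyΛ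
      refine Boot.step y (Finset.mem_Icc.mpr ⟨by linarith, by linarith⟩) u hu ?_
      intro w hw
      have hrange := hUR y hyn u hu w hw
      rw [abs_le] at hrange
      by_cases hwx : w < x'
      · exact ih w hw hwx
      · push_neg at hwx
        exact Boot.base w (hB'conv w (by linarith) (by linarith) (h w hw))
  have stepB : ∀ m : ℤ, m₀ - R ≤ m → m ≤ m₀ + R →
      m ∈ closure I U (Finset.Icc (ℓ - Δ + 1) n) θ' →
      m ∈ closure I U (Finset.Icc 1 ℓ) θ' := by
    intro m h1 h2 hm
    obtain ⟨hmΛ, u, hu, hb⟩ := closure_mem_boot hL2sub hUx hm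
    have hmn : m ∈ Finset.Icc (1:ℤ) n := hL2sub hmΛ
    refine boot_mem_closure hIne (Finset.mem_Icc.mpr ⟨by linarith, by linarith⟩) hu ?_
    intro w hw
    have hrange := hUR m hmn u hu w hw
    rw [abs_le] at hrange
    exact bootB w (hb w hw) (by linarith)
  -- assume the conclusion fails
  by_contra hcon
  push_neg at hcon
  rw [lt_min_iff] at hcon
  obtain ⟨hcon1, hcon2⟩ := hcon
  have hsub1 : (Finset.Icc (m₀ - R) (m₀ + R)).filter
        (fun y => y ∈ closure I U (Finset.Icc 1 ℓ) η)
      ⊆ (Finset.Icc (m₀ - R) (m₀ + R)).filter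
        (fun y => y ∈ closure I U (Finset.Icc 1 ℓ) θ') := by
    intro m hm
    rw [Finset.mem_filter] at hm ⊢
    obtain ⟨hmM, hmC⟩ := hm
    have hmM' := Finset.mem_Icc.mp hmM
    refine ⟨hmM, ?_⟩
    refine stepB m hmM'.1 hmM'.2 ?_
    rw [← hDθ]
    exact stepA m hmM'.1 hmM'.2 (by rw [← hCθ]; exact hmC)
  have hcard1 : ((Finset.Icc (m₀ - R) (m₀ + R)).filter
        (fun y => y ∈ closure I U (Finset.Icc 1 ℓ) θ')).card
      ≤ ((Finset.Icc (m₀ - R) (m₀ + R)).filter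
        (fun y => y ∈ closure I U (Finset.Icc 1 ℓ) η)).card := Nat.lt_succ_iff.mp hcon1
  have hFC := Finset.eq_of_subset_of_card_le hsub1 hcard1
  have hMcard : (Finset.Icc (m₀ - R) (m₀ + R)).card = 2 * R + 1 := by
    rw [Int.card_Icc]
    omega
  -- a site of M outside the closure of θ' on L₁
  have hexm : ∃ mh : ℤ, (m₀ - R ≤ mh ∧ mh ≤ m₀ + R) ∧
      mh ∉ closure I U (Finset.Icc 1 ℓ) θ' := by
    by_contra hall
    push_neg at hall
    have heq : (Finset.Icc (m₀ - R) (m₀ + R)).filter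
        (fun y => y ∈ closure I U (Finset.Icc 1 ℓ) θ') = Finset.Icc (m₀ - R) (m₀ + R) :=
      Finset.filter_true_of_mem (fun m hm => hall m (Finset.mem_Icc.mp hm))
    rw [heq, hMcard] at hcon2
    exact lt_irrefl _ hcon2
  obtain ⟨mh, ⟨hmh1, hmh2⟩, hmhF⟩ := hexm
  -- transfer lemmas using the equality of the filters
  have hMDC : ∀ m : ℤ, m₀ - R ≤ m → m ≤ m₀ + R →
      m ∈ closure I U (Finset.Icc (ℓ - Δ + 1) n) θ →
      m ∈ closure I U (Finset.Icc 1 ℓ) θ := by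
    intro m h1 h2 hm
    have hmF : m ∈ closure I U (Finset.Icc 1 ℓ) θ' := by
      refine stepB m h1 h2 ?_
      rw [← hDθ]; exact hm
    have hmem : m ∈ (Finset.Icc (m₀ - R) (m₀ + R)).filter
        (fun y => y ∈ closure I U (Finset.Icc 1 ℓ) θ') :=
      Finset.mem_filter.mpr ⟨Finset.mem_Icc.mpr ⟨h1, h2⟩, hmF⟩
    rw [← hFC] at hmem
    have := (Finset.mem_filter.mp hmem).2
    rwa [hCθ] at this
  have hMFC : ∀ m : ℤ, m₀ - R ≤ m → m ≤ m₀ + R →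
      m ∈ closure I U (Finset.Icc 1 ℓ) θ' →
      m ∈ closure I U (Finset.Icc 1 ℓ) θ := by
    intro m h1 h2 hm
    have hmem : m ∈ (Finset.Icc (m₀ - R) (m₀ + R)).filter
        (fun y => y ∈ closure I U (Finset.Icc 1 ℓ) θ') :=
      Finset.mem_filter.mpr ⟨Finset.mem_Icc.mpr ⟨h1, h2⟩, hm⟩
    rw [← hFC] at hmem
    have := (Finset.mem_filter.mp hmem).2
    rwa [hCθ] at this
  -- frozen sites of the L₂-dynamics
  have hfr : ∀ y : ℤ, y ∉ closure I U (Finset.Icc (ℓ - Δ + 1) n) θ → θ' y = θ y :=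
    fun y hy => frozen hθ' hy
  -- chains in the L₂-bootstrap of θ avoiding T₁ must cross M
  have p3 : ∀ z : ℤ, Boot I U (Finset.Icc (ℓ - Δ + 1) n) θ z →
      ¬ Boot I U (Finset.Icc 1 ℓ) θ z → z < m₀ - R → False := by
    intro z hz
    induction hz with
    | base y h => exact fun hn _ => hn (Boot.base y h)
    | step y hyΛ u hu h ih =>
      intro hnT1 hyM
      have hyn : y ∈ Finset.Icc (1:ℤ) n := hL2sub hyΛ
      rw [Finset.mem_Icc] at hyΛ
      have hyL1 : y ∈ Finset.Icc (1:ℤ) ℓ := Finset.mem_Icc.mpr ⟨by linarith, by linarith⟩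
      have hexy : ∃ w ∈ u, ¬ Boot I U (Finset.Icc 1 ℓ) θ w := by
        by_contra hc
        push_neg at hc
        exact hnT1 (Boot.step y hyL1 u hu hc)
      obtain ⟨w, hwu, hwn⟩ := hexy
      have hrange := hUR y hyn u hu w hwu
      rw [abs_le] at hrange
      by_cases hwM : w < m₀ - R
      · exact ih w hwu hwn hwM
      · push_neg at hwM
        have hw2 : w ≤ m₀ + R := by linarith
        cases h w hwu with
        | base _ hinf => exact hwn (Boot.base w hinf)
        | step _ hΛ2 u2 hu2 h2 =>
          have hwD : w ∈ closure I U (Finset.Icc (ℓ - Δ + 1) n) θ :=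
            boot_mem_closure hIne hΛ2 hu2 h2
          exact hwn (boot_of_mem_closure hL1sub hUx (hMDC w hwM hw2 hwD))
  -- chains in the L₁-bootstrap of θ' avoiding T₁ must cross M or end in D
  have p2 : ∀ z : ℤ, Boot I U (Finset.Icc 1 ℓ) θ' z →
      ¬ Boot I U (Finset.Icc 1 ℓ) θ z → z < m₀ - R → False := by
    intro z hz
    induction hz with
    | base y h =>
      intro hnT1 hyM
      have hθy : θ y ∉ I y := fun hI' => hnT1 (Boot.base y hI')
      have hyD : y ∈ closure I U (Finset.Icc (ℓ - Δ + 1) n) θ := by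
        by_contra hc
        exact hθy (hfr y hc ▸ h)
      exact p3 y (boot_of_mem_closure hL2sub hUx hyD) hnT1 hyM
    | step y hyΛ u hu h ih =>
      intro hnT1 hyM
      have hyn : y ∈ Finset.Icc (1:ℤ) n := hL1sub hyΛ
      have hexy : ∃ w ∈ u, ¬ Boot I U (Finset.Icc 1 ℓ) θ w := by
        by_contra hc
        push_neg at hc
        exact hnT1 (Boot.step y hyΛ u hu hc)
      obtain ⟨w, hwu, hwn⟩ := hexy
      have hrange := hUR y hyn u hu w hwu
      rw [abs_le] at hrange
      by_cases hwM : w < m₀ - R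
      · exact ih w hwu hwn hwM
      · push_neg at hwM
        have hw2 : w ≤ m₀ + R := by linarith
        cases h w hwu with
        | base _ hinf =>
          have hθw : θ w ∉ I w := fun hI' => hwn (Boot.base w hI')
          have hwD : w ∈ closure I U (Finset.Icc (ℓ - Δ + 1) n) θ := by
            by_contra hc
            exact hθw (hfr w hc ▸ hinf)
          exact hwn (boot_of_mem_closure hL1sub hUx (hMDC w hwM hw2 hwD))
        | step _ hΛ2 u2 hu2 h2 =>
          have hwF : w ∈ closure I U (Finset.Icc 1 ℓ) θ' :=
            boot_mem_closure hIne hΛ2 hu2 h2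
          exact hwn (boot_of_mem_closure hL1sub hUx (hMFC w hwM hw2 hwF))
  -- the two-sided screening of the full bootstrap of θ'
  have hphi : ∀ z : ℤ, Boot I U (Finset.Icc (1:ℤ) n) θ' z →
      (z < x' - R → Boot I U (Finset.Icc 1 ℓ) θ' z) ∧
      (x < z → Boot I U (Finset.Icc (ℓ - Δ + 1) n) θ' z) := by
    intro z hz
    induction hz with
    | base y h => exact ⟨fun _ => Boot.base y h, fun _ => Boot.base y h⟩
    | step y hyΛ u hu h ih =>
      have hyn := hyΛ
      rw [Finset.mem_Icc] at hyΛ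
      constructor
      · intro hyx'
        refine Boot.step y (Finset.mem_Icc.mpr ⟨hyΛ.1, by linarith⟩) u hu ?_
        intro w hw
        have hrange := hUR y hyn u hu w hw
        rw [abs_le] at hrange
        by_cases hwx' : w < x' - R
        · exact (ih w hw).1 hwx'
        · push_neg at hwx'
          have hw2 : w ≤ x' + R := by linarith
          have hwT2 : Boot I U (Finset.Icc (ℓ - Δ + 1) n) θ' w :=
            (ih w hw).2 (by linarith)
          exact Boot.base w (hB'conv w hwx' hw2 hwT2)
      · intro hxy
        refine Boot.step y (Finset.mem_Icc.mpr ⟨by linarith, hyΛ.2⟩) u hu ?_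
        intro w hw
        have hrange := hUR y hyn u hu w hw
        rw [abs_le] at hrange
        by_cases hwx : x < w
        · exact (ih w hw).2 hwx
        · push_neg at hwx
          have hw1 : x - R ≤ w := by linarith
          by_cases hwT2 : Boot I U (Finset.Icc (ℓ - Δ + 1) n) θ' w
          · exact hwT2
          · exfalso
            have hw3 : θ' w ∉ I w := fun hc => hwT2 (Boot.base w hc)
            have hw4 : w ∉ closure I U (Finset.Icc (ℓ - Δ + 1) n) θ' := fun hc =>
              hwT2 (boot_of_mem_closure hL2sub hUx hc)
            have hw5 : θ' w = θ w := hfr w (fun hc => hw4 (by rw [← hDθ]; exact hc))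
            have hw6 : θ w ∉ I w := fun hc => hw3 (by rw [hw5]; exact hc)
            have hw7 : ¬ Boot I U (Finset.Icc 1 ℓ) θ w := by
              intro hb
              cases hb with
              | base _ hinf => exact hw6 hinf
              | step _ hΛ2 u2 hu2 h2 =>
                exact hw6 (hBinf w (Finset.mem_Icc.mpr ⟨hw1, by linarith⟩)
                  (boot_mem_closure hIne hΛ2 hu2 h2))
            have hw8 : Boot I U (Finset.Icc 1 ℓ) θ' w := (ih w hw).1 (by linarith)
            exact p2 w hw8 hw7 (by linarith)
  -- conclude: mh is in fact in the closure of θ' on L₁, contradiction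
  have hmhL : mh ∈ closure I U (Finset.Icc (1:ℤ) n) θ' := by
    rw [hclθ']
    exact Finset.mem_coe.mpr (Finset.mem_Icc.mpr ⟨by linarith, by linarith⟩)
  obtain ⟨hmhΛ, u, hu, hb⟩ := closure_mem_boot (subset_refl _) hUx hmhL
  apply hmhF
  refine boot_mem_closure hIne (Finset.mem_Icc.mpr ⟨by linarith, by linarith⟩) hu ?_
  intro w hw
  have hrange := hUR mh hmhΛ u hu w hw
  rw [abs_le] at hrange
  by_cases hwx' : w < x' - R
  · exact (hphi w (hb w hw)).1 hwx'
  · push_neg at hwx'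
    have hw2 : w ≤ x' + R := by linarith
    exact Boot.base w (hB'conv w hwx' hw2 ((hphi w (hb w hw)).2 (by linarith)))

end KCM
end

section
/- The closure of a general KCM coincides with the bootstrap closure of the infection pattern: for every η ∈ S_L and boundary condition ω, {η}_L^ω equals the smallest set A ⊆ L with the property that for every y ∈ L, if there exists U ∈ U_y with U ⊆ {z ∈ ℤ : (η·ω)_z ∈ I_z} ∪ A, then y ∈ A. -/
open scoped Classical

namespace KCM

variable {S : ℤ → Type}

variable [∀ x, Fintype (S x)]

section Aux

variable {I : ∀ x : ℤ, Set (S x)} {U : ℤ → Finset (Finset ℤ)} {L : Finset ℤ}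

lemma reach_symm_s16 {a b : Config S} (h : Reach I U L a b) : Reach I U L b a :=
  (@Relation.ReflTransGen.stdSymm _ _ ⟨fun _ _ h => h.symm⟩).symm _ _ h

lemma constraint_update {x w : ℤ} {s : S x} (hs : s ∈ I x) {ζ : Config S}
    (h : Constraint I U w ζ) : Constraint I U w (Function.update ζ x s) := by
  obtain ⟨u, hu, hinf⟩ := h
  refine ⟨u, hu, fun y hy => ?_⟩
  by_cases hyx : y = x
  · subst hyx; rw [Function.update_self]; exact hs
  · rw [Function.update_of_ne hyx]; exact hinf y hy

lemma step_update_of {x : ℤ} {s : S x} (hs : s ∈ I x) {a b : Config S}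
    (h : Step I U L a b) :
    Step I U L (Function.update a x s) (Function.update b x s) ∨
      Function.update a x s = Function.update b x s := by
  obtain ⟨w, hwL, hc, hagree⟩ := h
  by_cases hwx : w = x
  · right; subst hwx
    funext y
    by_cases hyx : y = w
    · subst hyx; simp
    · rw [Function.update_of_ne hyx, Function.update_of_ne hyx, hagree y hyx]
  · left
    refine ⟨w, hwL, constraint_update hs hc, fun y hy => ?_⟩
    by_cases hyx : y = x
    · subst hyx; simp
    · rw [Function.update_of_ne hyx, Function.update_of_ne hyx]
      exact hagree y hy

lemma reach_update {x : ℤ} {s : S x} (hs : s ∈ I x) {a b : Config S}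
    (h : Reach I U L a b) :
    Reach I U L (Function.update a x s) (Function.update b x s) := by
  induction h with
  | refl => exact Relation.ReflTransGen.refl
  | tail _ hbc ih =>
    rcases hbc with hbc | hcb
    · rcases step_update_of hs hbc with hstep | heq
      · exact ih.tail (Or.inl hstep)
      · rwa [heq] at ih
    · rcases step_update_of hs hcb with hstep | heq
      · exact ih.tail (Or.inr hstep)
      · rwa [heq.symm] at ih

lemma reach_infect {η : Config S} {x : ℤ} (hx : x ∈ closure I U L η)
    {s : S x} (hs : s ∈ I x) {ζ : Config S} (hζ : Reach I U L η ζ) :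
    Reach I U L η (Function.update ζ x s) := by
  obtain ⟨hxL, η', hreach, hc⟩ := hx
  have h1 : Step I U L η' (Function.update η' x s) :=
    ⟨x, hxL, hc, fun y hy => Function.update_of_ne hy _ _⟩
  have h2 : Reach I U L η' ζ := (reach_symm_s16 hreach).trans hζ
  have hstep : Reach I U L η' (Function.update η' x s) :=
    Relation.ReflTransGen.single (Or.inl h1)
  exact hreach.trans (hstep.trans (reach_update hs h2))

lemma reach_infect_list {η : Config S} (hI : ∀ x : ℤ, ∃ s, s ∈ I x) :
    ∀ l : List ℤ, (∀ x ∈ l, x ∈ closure I U L η) →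
    ∃ ζ, Reach I U L η ζ ∧ (∀ z ∈ l, ζ z ∈ I z) ∧ (∀ w, w ∉ l → ζ w = η w) := by
  intro l
  induction l with
  | nil => exact fun _ => ⟨η, Relation.ReflTransGen.refl, by simp, fun _ _ => rfl⟩
  | cons x l ih =>
    intro hl
    obtain ⟨ζ, hreach, hinf, hoff⟩ := ih (fun z hz => hl z (List.mem_cons_of_mem _ hz))
    obtain ⟨s, hs⟩ := hI x
    refine ⟨Function.update ζ x s,
      reach_infect (hl x ((List.mem_cons_self (a := x) (l := l)))) hs hreach, ?_, ?_⟩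
    · intro z hz
      by_cases hzx : z = x
      · subst hzx; simpa using hs
      · rw [Function.update_of_ne hzx]
        exact hinf z ((List.mem_cons.mp hz).resolve_left hzx)
    · intro w hw
      have hwx : w ≠ x := fun h => hw (h ▸ (List.mem_cons_self (a := x) (l := l)))
      rw [Function.update_of_ne hwx]
      exact hoff w (fun h => hw (List.mem_cons_of_mem _ h))

lemma reach_invariant {η : Config S} {A : Set ℤ}
    (hclosed : ∀ y ∈ L, (∃ u ∈ U y, ∀ z ∈ u, η z ∈ I z ∨ z ∈ A) → y ∈ A)
    (hUx : ∀ x ∈ L, ∀ u ∈ U x, x ∉ u)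
    {ζ : Config S} (h : Reach I U L η ζ) :
    ∀ z, z ∉ A → ζ z = η z := by
  induction h with
  | refl => exact fun _ _ => rfl
  | @tail b c _ hbc ih =>
    -- extract: site x ∈ L, rule u ∈ U x, all of u infected in b, and c = b off x
    have key : ∃ x ∈ L, (∃ u ∈ U x, ∀ y ∈ u, b y ∈ I y) ∧ ∀ y : ℤ, y ≠ x → c y = b y := by
      rcases hbc with ⟨x, hxL, ⟨u, hu, hinfu⟩, hagree⟩ | ⟨x, hxL, ⟨u, hu, hinfu⟩, hagree⟩
      · exact ⟨x, hxL, ⟨u, hu, hinfu⟩, hagree⟩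
      · refine ⟨x, hxL, ⟨u, hu, fun y hy => ?_⟩, fun y hy => (hagree y hy).symm⟩
        have hyx : y ≠ x := fun h => hUx x hxL u hu (h ▸ hy)
        rw [hagree y hyx]; exact hinfu y hy
    obtain ⟨x, hxL, ⟨u, hu, hinfu⟩, hagree⟩ := key
    have hxA : x ∈ A := by
      refine hclosed x hxL ⟨u, hu, fun z hz => ?_⟩
      by_cases hzA : z ∈ A
      · exact Or.inr hzA
      · exact Or.inl ((ih z hzA) ▸ hinfu z hz)
    intro z hzA
    have hzx : z ≠ x := fun h => hzA (h ▸ hxA)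
    rw [hagree z hzx]; exact ih z hzA

end Aux

/-- The closure coincides with the bootstrap closure of the
infection pattern: it is the smallest `A ⊆ L` such that any `y ∈ L` having a
rule contained in the union of `A` and the infected sites of `η` lies in `A`. -/
theorem statement16 (S : ℤ → Type) [∀ x, Fintype (S x)] (L : Finset ℤ)
    (q R : ℝ)
    (hq0 : 0 < q) (hq1 : q ≤ 1) (hR : 1 ≤ R)
    (π : ∀ x : ℤ, S x → ℝ) (I : ∀ x : ℤ, Set (S x)) (U : ℤ → Finset (Finset ℤ))
    (hπpos : ∀ (x : ℤ) (s : S x), 0 < π x s)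
    (hπsum : ∀ x : ℤ, ∑ s : S x, π x s = 1)
    (hπI : ∀ x : ℤ, q ≤ ∑ s : S x, if s ∈ I x then π x s else 0)
    (hUx : ∀ x ∈ L, ∀ u ∈ U x, x ∉ u)
    (hUR : ∀ x ∈ L, ∀ u ∈ U x, ∀ y ∈ u, ((|y - x| : ℤ) : ℝ) ≤ R)
    (η : Config S) :
    (closure I U L η ⊆ ↑L ∧
        ∀ y ∈ L, (∃ u ∈ U y, ∀ z ∈ u, η z ∈ I z ∨ z ∈ closure I U L η) →
          y ∈ closure I U L η) ∧
      ∀ A : Set ℤ, A ⊆ ↑L →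
        (∀ y ∈ L, (∃ u ∈ U y, ∀ z ∈ u, η z ∈ I z ∨ z ∈ A) → y ∈ A) →
        closure I U L η ⊆ A := by
  have hI : ∀ x : ℤ, ∃ s, s ∈ I x := by
    intro x
    by_contra h
    push_neg at h
    have hzero : (∑ s : S x, if s ∈ I x then π x s else 0) = 0 :=
      Finset.sum_eq_zero fun s _ => by simp [h s]
    have := hπI x
    rw [hzero] at this
    linarith
  refine ⟨⟨fun x hx => hx.1, ?_⟩, ?_⟩
  · rintro y hyL ⟨u, hu, hz⟩
    set l : List ℤ := (u.filter (fun z => z ∈ closure I U L η)).toList with hl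
    have hlmem : ∀ x ∈ l, x ∈ closure I U L η := by
      intro x hx
      rw [hl, Finset.mem_toList, Finset.mem_filter] at hx
      exact hx.2
    obtain ⟨ζ, hreach, hinf, hoff⟩ := reach_infect_list hI l hlmem
    refine ⟨hyL, ζ, hreach, u, hu, fun z hz' => ?_⟩
    by_cases hzc : z ∈ closure I U L η
    · exact hinf z (by rw [hl, Finset.mem_toList, Finset.mem_filter]; exact ⟨hz', hzc⟩)
    · have hzη : η z ∈ I z := (hz z hz').resolve_right hzc
      have hznl : z ∉ l := by
        rw [hl, Finset.mem_toList, Finset.mem_filter]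
        exact fun h => hzc h.2
      rw [hoff z hznl]; exact hzη
  · rintro A hA hclosed x ⟨hxL, η', hreach, u, hu, hinf⟩
    have hinv := reach_invariant hclosed hUx hreach
    refine hclosed x hxL ⟨u, hu, fun z hz => ?_⟩
    by_cases hzA : z ∈ A
    · exact Or.inr hzA
    · exact Or.inl ((hinv z hzA) ▸ hinf z hz)

end KCM
end
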